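/- arXiv:1811.04597 — 2 statements merged into one kernel-verified Lean document; each statement's English description precedes it below -/
import Mathlib

section
/- Let φ: Ω → ℝ be measurable and Φ: Ω → X be strongly measurable and first-type Birkhoff integrable with respect to ν, and set N(A) := (Bi₁)∫_A Φ dν for A ∈ 𝒜. For n ≥ 1 put G_n := {ω ∈ Ω : n−1 ≤ |φ(ω)| ≤ n}. Then for every ε > 0 there exist, for each n, countable measurable partitions {U_n^j, j ∈ ℕ} of G_n such that for every finer partitions {V_n^j, j ∈ ℕ} of each G_n and every choice of points ω_n^j ∈ V_n^j one has Σ_n Σ_j ‖Φ(ω_n^j)φ(ω_n^j)ν(V_n^j) − φ(ω_n^j)N(V_n^j)‖ ≤ 2ε. -/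
open MeasureTheory Filter Set Function

noncomputable section

variable {Ω : Type*} {X : Type*}

/-- A countable measurable partition of a measurable set `G`:
a countable family of pairwise disjoint measurable sets covering `G`
(pieces may be empty, which accounts for finite or countable families). -/
structure CountablePartitionOn [MeasurableSpace Ω] (G : Set Ω) where
  piece : ℕ → Set Ω
  measurable : ∀ n, MeasurableSet (piece n)
  disj : Pairwise (Function.onFun Disjoint piece)
  cover : (⋃ n, piece n) = G

/-- `P` is finer than `P'` if every piece of `P` is contained in some piece of `P'`. -/
def CountablePartitionOn.Finer [MeasurableSpace Ω] {G : Set Ω}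
    (P P' : CountablePartitionOn G) : Prop :=
  ∀ n, ∃ m, P.piece n ⊆ P'.piece m

/-- A choice of tags for a partition: a point in each nonempty piece. -/
def CountablePartitionOn.IsTagging [MeasurableSpace Ω] {G : Set Ω}
    (P : CountablePartitionOn G) (t : ℕ → Ω) : Prop :=
  ∀ n, (P.piece n).Nonempty → t n ∈ P.piece n

/-- Generic Birkhoff-type integral: the Riemann-type sums `∑ term (t k) (U k)`
attached to countable measurable partitions converge to `I` in the Birkhoff sense. -/
def HasBirkhoffSumOn [MeasurableSpace Ω] [NormedAddCommGroup X]
    (term : Ω → Set Ω → X) (G : Set Ω) (I : X) : Prop :=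
  ∀ ε > (0:ℝ), ∃ P : CountablePartitionOn G,
    ∀ P' : CountablePartitionOn G, P'.Finer P → ∀ t : ℕ → Ω, P'.IsTagging t →
      Filter.limsup
        (fun n => ‖(∑ k ∈ Finset.range n, term (t k) (P'.piece k)) - I‖) Filter.atTop < ε

/-- First-type Birkhoff integral of a vector-valued function with respect to a
scalar measure, over the set `A`. -/
def HasBi1On [MeasurableSpace Ω] [NormedAddCommGroup X] [NormedSpace ℝ X]
    (ν : Measure Ω) (Φ : Ω → X) (A : Set Ω) (I : X) : Prop :=
  HasBirkhoffSumOn (fun ω U => (ν U).toReal • Φ ω) A I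

/-- Second-type Birkhoff integral of a scalar function with respect to a
vector-valued set function, over the set `A`. -/
def HasBi2On [MeasurableSpace Ω] [NormedAddCommGroup X] [NormedSpace ℝ X]
    (N : Set Ω → X) (φ : Ω → ℝ) (A : Set Ω) (I : X) : Prop :=
  HasBirkhoffSumOn (fun ω U => φ ω • N U) A I

/-- If `Φ` has first-type Birkhoff sum `I` over the empty set, then `I = 0`. -/
lemma birkhoff_empty_aux [MeasurableSpace Ω] [NormedAddCommGroup X] [NormedSpace ℝ X]
    [Nonempty Ω] (ν : Measure Ω) (Φ : Ω → X) {I : X}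
    (hI : HasBi1On ν Φ (∅ : Set Ω) I) : I = 0 := by
  have key : ∀ ε > (0:ℝ), ‖I‖ < ε := by
    intro ε hε
    obtain ⟨P, hP⟩ := hI ε hε
    have hpieces : ∀ n, P.piece n = ∅ := by
      intro n
      have h := Set.subset_iUnion P.piece n
      rw [P.cover] at h
      exact Set.eq_empty_of_subset_empty h
    have h := hP P (fun n => ⟨n, subset_rfl⟩) (fun _ => Classical.arbitrary Ω)
      (fun n hn => by simp [hpieces n] at hn)
    have hconst : (fun n => ‖(∑ k ∈ Finset.range n,
        (ν (P.piece k)).toReal • Φ (Classical.arbitrary Ω)) - I‖) = fun _ => ‖I‖ := by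
      funext n
      simp [hpieces]
    rw [hconst, Filter.limsup_const] at h
    exact h
  by_contra h
  exact absurd (key ‖I‖ (norm_pos_iff.mpr h)) (lt_irrefl _)

/-- Triangle inequality helper. -/
private lemma tri_aux [NormedAddCommGroup X] (a b c : X) : ‖a - c‖ ≤ ‖a - b‖ + ‖b - c‖ := by
  simpa [dist_eq_norm] using dist_triangle a b c

/-- If `Φ` oscillates by at most `δ` on `V` and has first-type Birkhoff sum `I` over `V`,
then `I` is within `δ · ν(V)` of the one-point Riemann sum `ν(V) Φ(t)`. -/
lemma bi1_small_piece_aux [MeasurableSpace Ω] [NormedAddCommGroup X] [NormedSpace ℝ X]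
    (ν : Measure Ω) [IsFiniteMeasure ν] (Φ : Ω → X) {V : Set Ω}
    {I : X} (hI : HasBi1On ν Φ V I) {t : Ω} (ht : t ∈ V) {δ : ℝ} (hδ : 0 ≤ δ)
    (hosc : ∀ s ∈ V, ‖Φ s - Φ t‖ ≤ δ) :
    ‖I - (ν V).toReal • Φ t‖ ≤ δ * (ν V).toReal := by
  classical
  set m := (ν V).toReal with hm
  refine le_of_forall_pos_le_add (fun c hc => ?_)
  obtain ⟨P, hP⟩ := hI (c/2) (by positivity)
  set τ : ℕ → Ω := fun k => if h : (P.piece k).Nonempty then h.choose else t with hτ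
  have hτmem : ∀ k, (P.piece k).Nonempty → τ k ∈ P.piece k := by
    intro k hk
    simp only [hτ, dif_pos hk]
    exact hk.choose_spec
  have hτδ : ∀ k, ‖Φ (τ k) - Φ t‖ ≤ δ := by
    intro k
    by_cases hk : (P.piece k).Nonempty
    · refine hosc _ ?_
      have h := Set.subset_iUnion P.piece k
      rw [P.cover] at h
      exact h (hτmem k hk)
    · simp [hτ, dif_neg hk, hδ]
  have hlim := hP P (fun n => ⟨n, subset_rfl⟩) τ hτmem
  set g : ℕ → ℝ := fun k => (ν (P.piece k)).toReal with hg
  have hg0 : ∀ k, 0 ≤ g k := fun k => ENNReal.toReal_nonneg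
  have hνV : ν V = ∑' k, ν (P.piece k) := by
    have h := measure_iUnion (μ := ν) P.disj P.measurable
    rw [P.cover] at h
    exact h
  have htop : ∑' k, ν (P.piece k) ≠ ⊤ := by rw [← hνV]; exact measure_ne_top ν V
  have hm2 : m = ∑' k, (ν (P.piece k)).toReal := by
    rw [hm, hνV, ENNReal.tsum_toReal_eq (fun k => measure_ne_top ν _)]
  have hsum : HasSum g m := hm2 ▸ ENNReal.hasSum_toReal htop
  have hcn_le : ∀ n, ∑ k ∈ Finset.range n, g k ≤ m :=
    fun n => sum_le_hasSum _ (fun k _ => hg0 k) hsum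
  have hcn_nonneg : ∀ n, 0 ≤ ∑ k ∈ Finset.range n, g k :=
    fun n => Finset.sum_nonneg (fun k _ => hg0 k)
  have claim1 : ∀ n, ‖(∑ k ∈ Finset.range n, g k • Φ (τ k)) -
      (∑ k ∈ Finset.range n, g k) • Φ t‖ ≤ δ * m := by
    intro n
    rw [Finset.sum_smul, ← Finset.sum_sub_distrib]
    calc ‖∑ k ∈ Finset.range n, (g k • Φ (τ k) - g k • Φ t)‖
        ≤ ∑ k ∈ Finset.range n, ‖g k • Φ (τ k) - g k • Φ t‖ := norm_sum_le _ _
      _ ≤ ∑ k ∈ Finset.range n, g k * δ := by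
          refine Finset.sum_le_sum fun k _ => ?_
          rw [← smul_sub, norm_smul, Real.norm_eq_abs, abs_of_nonneg (hg0 k)]
          exact mul_le_mul_of_nonneg_left (hτδ k) (hg0 k)
      _ = (∑ k ∈ Finset.range n, g k) * δ := (Finset.sum_mul _ _ _).symm
      _ ≤ m * δ := mul_le_mul_of_nonneg_right (hcn_le n) hδ
      _ = δ * m := mul_comm _ _
  have hsmul_norm : ∀ n, ‖(∑ k ∈ Finset.range n, g k) • Φ t‖ ≤ m * ‖Φ t‖ := by
    intro n
    rw [norm_smul, Real.norm_eq_abs, abs_of_nonneg (hcn_nonneg n)]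
    exact mul_le_mul_of_nonneg_right (hcn_le n) (norm_nonneg _)
  have hbdd : Filter.IsBoundedUnder (· ≤ ·) Filter.atTop
      (fun n => ‖(∑ k ∈ Finset.range n, g k • Φ (τ k)) - I‖) := by
    refine Filter.isBoundedUnder_of ⟨δ * m + m * ‖Φ t‖ + ‖I‖, fun n => ?_⟩
    have h1 := tri_aux (∑ k ∈ Finset.range n, g k • Φ (τ k))
      ((∑ k ∈ Finset.range n, g k) • Φ t) I
    have h2 := norm_sub_le ((∑ k ∈ Finset.range n, g k) • Φ t) I
    have h3 := claim1 n
    have h4 := hsmul_norm n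
    simp only [Function.comp] at *
    linarith
  have hev1 : ∀ᶠ n in Filter.atTop,
      ‖(∑ k ∈ Finset.range n, g k • Φ (τ k)) - I‖ < c/2 :=
    Filter.eventually_lt_of_limsup_lt hlim hbdd
  set η : ℝ := c / (2 * (‖Φ t‖ + 1)) with hη
  have hηpos : 0 < η := by positivity
  have hev2 : ∀ᶠ n in Filter.atTop,
      dist (∑ k ∈ Finset.range n, g k) m < η := by
    obtain ⟨Nn, hNn⟩ := Metric.tendsto_atTop.mp hsum.tendsto_sum_nat η hηpos
    exact Filter.eventually_atTop.mpr ⟨Nn, hNn⟩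
  obtain ⟨n, hn1, hn2⟩ := (hev1.and hev2).exists
  have hdist : |(∑ k ∈ Finset.range n, g k) - m| < η := by
    rwa [Real.dist_eq] at hn2
  have hfinal : ‖I - m • Φ t‖ ≤
      ‖I - (∑ k ∈ Finset.range n, g k • Φ (τ k))‖ +
      ‖(∑ k ∈ Finset.range n, g k • Φ (τ k)) -
        (∑ k ∈ Finset.range n, g k) • Φ t‖ +
      ‖(∑ k ∈ Finset.range n, g k) • Φ t - m • Φ t‖ := by
    have h1 := tri_aux I ((∑ k ∈ Finset.range n, g k • Φ (τ k))) (m • Φ t)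
    have h2 := tri_aux ((∑ k ∈ Finset.range n, g k • Φ (τ k)))
      ((∑ k ∈ Finset.range n, g k) • Φ t) (m • Φ t)
    linarith
  have hA : ‖I - (∑ k ∈ Finset.range n, g k • Φ (τ k))‖ < c/2 := by
    rw [norm_sub_rev]; exact hn1
  have hB := claim1 n
  have hC : ‖(∑ k ∈ Finset.range n, g k) • Φ t - m • Φ t‖ ≤ η * ‖Φ t‖ := by
    rw [← sub_smul, norm_smul, Real.norm_eq_abs]
    exact mul_le_mul_of_nonneg_right hdist.le (norm_nonneg _)
  have hηΦ : η * ‖Φ t‖ ≤ c/2 := by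
    rw [hη]
    rw [div_mul_eq_mul_div, div_le_iff₀ (by positivity)]
    nlinarith [norm_nonneg (Φ t), hc.le]
  linarith
/-- Partition of a measurable set into countably many measurable pieces on which a
strongly measurable function oscillates by at most `δ`. -/
lemma exists_osc_partition_aux [MeasurableSpace Ω] [NormedAddCommGroup X]
    {Φ : Ω → X} (hΦm : StronglyMeasurable Φ) {G : Set Ω} (hGm : MeasurableSet G)
    {δ : ℝ} (hδ : 0 < δ) :
    ∃ P : CountablePartitionOn G, ∀ k, ∀ a ∈ P.piece k, ∀ b ∈ P.piece k,
      ‖Φ a - Φ b‖ ≤ δ := by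
  borelize X
  haveI hsep : TopologicalSpace.SeparableSpace (Set.range Φ ∪ {0} : Set X) :=
    hΦm.separableSpace_range_union_singleton
  haveI hne : Nonempty (Set.range Φ ∪ {0} : Set X) := ⟨⟨0, Or.inr rfl⟩⟩
  obtain ⟨u, hu⟩ := TopologicalSpace.exists_dense_seq (Set.range Φ ∪ {0} : Set X)
  set C : ℕ → Set Ω := fun i => G ∩ Φ ⁻¹' Metric.ball (u i : X) (δ/2) with hC
  have hCm : ∀ i, MeasurableSet (C i) :=
    fun i => hGm.inter (hΦm.measurable measurableSet_ball)
  have hCcover : (⋃ i, C i) = G := by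
    apply Set.Subset.antisymm
    · exact Set.iUnion_subset fun i => Set.inter_subset_left
    · intro ω hω
      have hmem : Φ ω ∈ (Set.range Φ ∪ {0} : Set X) := Or.inl ⟨ω, rfl⟩
      obtain ⟨i, hi⟩ := hu.exists_dist_lt (⟨Φ ω, hmem⟩) (half_pos hδ)
      refine Set.mem_iUnion.mpr ⟨i, hω, ?_⟩
      simp only [Set.mem_preimage, Metric.mem_ball]
      rw [Subtype.dist_eq] at hi
      simpa [dist_comm] using hi
  refine ⟨⟨disjointed C, fun n => MeasurableSet.disjointed hCm n,
    disjoint_disjointed C, by rw [iUnion_disjointed, hCcover]⟩, ?_⟩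
  intro k a ha b hb
  have ha' : Φ a ∈ Metric.ball (u k : X) (δ/2) := (disjointed_subset C k ha).2
  have hb' : Φ b ∈ Metric.ball (u k : X) (δ/2) := (disjointed_subset C k hb).2
  rw [Metric.mem_ball] at ha' hb'
  have := dist_triangle (Φ a) ((u k : X)) (Φ b)
  rw [← dist_eq_norm]
  rw [dist_comm (u k : X) (Φ b)] at this
  linarith [ha', hb', this]

/-- Lemma 2.6 of the paper. Let `φ` be measurable, `Φ` strongly measurable
and first-type Birkhoff integrable w.r.t. `ν` on every measurable set, with indefinite
integral `N`. Put `G n := {ω : n-1 ≤ |φ ω| ≤ n}` for `n ≥ 1`.  Then for every `ε > 0`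
there are countable measurable partitions `P n` of `G (n+1)` such that for all finer
partitions `P' n` and all choices of tags `t n j ∈ (P' n).piece j` one has
`∑_{n,j} ‖φ(t n j) • Φ(t n j) ν(V n j) − φ(t n j) • N(V n j)‖ ≤ 2ε`
(stated via arbitrary finite partial sums of the double series). -/
theorem bi1_double_sum_estimate
    [MeasurableSpace Ω] [NormedAddCommGroup X] [NormedSpace ℝ X]
    (ν : Measure Ω) [IsFiniteMeasure ν]
    (φ : Ω → ℝ) (hφ : Measurable φ)
    (Φ : Ω → X) (hΦm : StronglyMeasurable Φ)
    (N : Set Ω → X) (hN : ∀ A : Set Ω, MeasurableSet A → HasBi1On ν Φ A (N A))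
    (hΦi : ∃ I, HasBi1On ν Φ Set.univ I)
    (G : ℕ → Set Ω)
    (hG : ∀ n, G n = {ω : Ω | (n : ℝ) - 1 ≤ |φ ω| ∧ |φ ω| ≤ (n : ℝ)})
    (ε : ℝ) (hε : 0 < ε) :
    ∃ P : ∀ n : ℕ, CountablePartitionOn (G (n + 1)),
      ∀ P' : ∀ n : ℕ, CountablePartitionOn (G (n + 1)),
        (∀ n, (P' n).Finer (P n)) →
        ∀ t : ℕ → ℕ → Ω, (∀ n, (P' n).IsTagging (t n)) →
          ∀ s : Finset (ℕ × ℕ),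
            ∑ p ∈ s,
              ‖(ν ((P' p.1).piece p.2)).toReal • (φ (t p.1 p.2) • Φ (t p.1 p.2)) -
                φ (t p.1 p.2) • N ((P' p.1).piece p.2)‖ ≤ 2 * ε := by
  classical
  rcases isEmpty_or_nonempty Ω with hΩ | hΩ
  · refine ⟨fun n => ⟨fun _ => ∅, fun _ => MeasurableSet.empty,
      fun i j _ => by simp [Function.onFun], by
        simp [Set.eq_empty_of_isEmpty (G (n+1))]⟩, ?_⟩
    intro P' _ t _ _
    exact (hΩ.false (t 0 0)).elim
  · set M : ℝ := (ν Set.univ).toReal with hM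
    have hM0 : 0 ≤ M := ENNReal.toReal_nonneg
    have hGm : ∀ n, MeasurableSet (G n) := by
      intro n
      rw [hG n]
      exact (measurableSet_le measurable_const hφ.abs).inter
        (measurableSet_le hφ.abs measurable_const)
    set δ : ℕ → ℝ := fun n => ε / ((n+1) * (M+1) * 2^n) with hδdef
    have hδpos : ∀ n, 0 < δ n := by
      intro n
      have : (0:ℝ) < (n+1) * (M+1) * 2^n := by positivity
      exact div_pos hε this
    choose P hP using fun n : ℕ => exists_osc_partition_aux hΦm (hGm (n+1)) (hδpos n)
    refine ⟨P, ?_⟩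
    intro P' hfiner t ht s
    have key : ∀ p : ℕ × ℕ,
        ‖(ν ((P' p.1).piece p.2)).toReal • (φ (t p.1 p.2) • Φ (t p.1 p.2)) -
          φ (t p.1 p.2) • N ((P' p.1).piece p.2)‖ ≤
        ε / ((M+1) * 2^p.1) * (ν ((P' p.1).piece p.2)).toReal := by
      rintro ⟨n, j⟩
      rcases Set.eq_empty_or_nonempty ((P' n).piece j) with hVe | hVne
      · have hN0 : N ((P' n).piece j) = 0 := by
          apply birkhoff_empty_aux ν Φ
          rw [← hVe]
          exact hN _ ((P' n).measurable j)
        rw [hVe] at hN0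
        rw [hVe, hN0]
        simp only [measure_empty, ENNReal.toReal_zero, zero_smul, smul_zero,
          sub_zero, norm_zero, mul_zero]
        exact le_refl 0
      · obtain ⟨m, hsub⟩ := hfiner n j
        have htag : t n j ∈ (P' n).piece j := ht n j hVne
        have hosc : ∀ x ∈ (P' n).piece j, ‖Φ x - Φ (t n j)‖ ≤ δ n := fun x hx =>
          hP n m x (hsub hx) (t n j) (hsub htag)
        have hkey := bi1_small_piece_aux ν Φ (hN _ ((P' n).measurable j)) htag
          (hδpos n).le hosc
        have hmemG : t n j ∈ G (n+1) := by
          have h := Set.subset_iUnion ((P' n).piece) j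
          rw [(P' n).cover] at h
          exact h htag
        have hφt : |φ (t n j)| ≤ (n:ℝ) + 1 := by
          rw [hG (n+1)] at hmemG
          have := hmemG.2
          push_cast at this
          linarith
        have hrw : (ν ((P' n).piece j)).toReal • (φ (t n j) • Φ (t n j)) -
            φ (t n j) • N ((P' n).piece j) =
            φ (t n j) • ((ν ((P' n).piece j)).toReal • Φ (t n j) - N ((P' n).piece j)) := by
          rw [smul_sub, smul_comm]
        rw [hrw, norm_smul, Real.norm_eq_abs, norm_sub_rev]
        calc |φ (t n j)| * ‖N ((P' n).piece j) -
              (ν ((P' n).piece j)).toReal • Φ (t n j)‖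
            ≤ ((n:ℝ)+1) * (δ n * (ν ((P' n).piece j)).toReal) := by
              apply mul_le_mul hφt hkey (norm_nonneg _) (by positivity)
          _ = ε / ((M+1) * 2^n) * (ν ((P' n).piece j)).toReal := by
              rw [hδdef]
              have h1 : ((n:ℝ)+1) ≠ 0 := by positivity
              have h2 : (M+1) ≠ 0 := by positivity
              have h3 : (2:ℝ)^n ≠ 0 := by positivity
              field_simp
    have hinner : ∀ (n : ℕ) (B : Finset ℕ),
        ∑ j ∈ B, (ν ((P' n).piece j)).toReal ≤ M := by
      intro n B
      have hdisj : (B : Set ℕ).PairwiseDisjoint ((P' n).piece) :=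
        (P' n).disj.set_pairwise _
      have hmeas : ∀ j ∈ B, MeasurableSet ((P' n).piece j) :=
        fun j _ => (P' n).measurable j
      have h1 : ∑ j ∈ B, ν ((P' n).piece j) = ν (⋃ j ∈ B, (P' n).piece j) :=
        (measure_biUnion_finset hdisj hmeas).symm
      have h2 : ν (⋃ j ∈ B, (P' n).piece j) ≤ ν Set.univ :=
        measure_mono (Set.subset_univ _)
      calc ∑ j ∈ B, (ν ((P' n).piece j)).toReal
          = (∑ j ∈ B, ν ((P' n).piece j)).toReal :=
            (ENNReal.toReal_sum (fun j _ => measure_ne_top ν _)).symm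
        _ ≤ M := by
            rw [hM, h1]
            exact ENNReal.toReal_mono (measure_ne_top ν _) h2
    set A := s.image Prod.fst with hA
    set B := s.image Prod.snd with hB
    calc ∑ p ∈ s, ‖(ν ((P' p.1).piece p.2)).toReal • (φ (t p.1 p.2) • Φ (t p.1 p.2)) -
            φ (t p.1 p.2) • N ((P' p.1).piece p.2)‖
        ≤ ∑ p ∈ s, ε / ((M+1) * 2^p.1) * (ν ((P' p.1).piece p.2)).toReal :=
          Finset.sum_le_sum (fun p _ => key p)
      _ ≤ ∑ p ∈ A ×ˢ B, ε / ((M+1) * 2^p.1) * (ν ((P' p.1).piece p.2)).toReal := by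
          refine Finset.sum_le_sum_of_subset_of_nonneg Finset.subset_product
            (fun p _ _ => ?_)
          positivity
      _ = ∑ n ∈ A, ∑ j ∈ B, ε / ((M+1) * 2^n) * (ν ((P' n).piece j)).toReal := by
          rw [Finset.sum_product]
      _ = ∑ n ∈ A, ε / ((M+1) * 2^n) * ∑ j ∈ B, (ν ((P' n).piece j)).toReal := by
          simp [Finset.mul_sum]
      _ ≤ ∑ n ∈ A, ε / ((M+1) * 2^n) * M := by
          refine Finset.sum_le_sum (fun n _ => ?_)
          exact mul_le_mul_of_nonneg_left (hinner n B) (by positivity)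
      _ ≤ ∑ n ∈ A, ε * (1/2)^n := by
          refine Finset.sum_le_sum (fun n _ => ?_)
          have hpow : ((1:ℝ)/2)^n * 2^n = 1 := by
            rw [← mul_pow]; norm_num
          rw [div_mul_eq_mul_div, div_le_iff₀ (by positivity)]
          have h2 : ε * (1/2)^n * ((M+1) * 2^n) = ε * (M+1) := by
            calc ε * (1/2)^n * ((M+1) * 2^n)
                = ε * (M+1) * ((1/2)^n * 2^n) := by ring
              _ = ε * (M+1) := by rw [hpow, mul_one]
          rw [h2]
          nlinarith [hε.le, hM0]
      _ = ε * ∑ n ∈ A, (1/2:ℝ)^n := (Finset.mul_sum _ _ _).symm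
      _ ≤ ε * 2 := by
          refine mul_le_mul_of_nonneg_left ?_ hε.le
          calc ∑ n ∈ A, (1/2:ℝ)^n ≤ ∑' n, (1/2:ℝ)^n :=
                Summable.sum_le_tsum A (fun i _ => by positivity) summable_geometric_two
            _ = 2 := tsum_geometric_two
      _ = 2 * ε := mul_comm _ _
end
end

section
/- Let φ: Ω → ℝ be measurable and Φ: Ω → X be strongly measurable and first-type Birkhoff integrable with respect to ν, and define the vector measure N(A) := (Bi₁)∫_A Φ dν. Then the product function ω ↦ φ(ω)Φ(ω) is first-type Birkhoff integrable with respect to ν if and only if φ is second-type Birkhoff integrable with respect to N, and in that case (Bi₁)∫_Ω φ(ω)Φ(ω) dν = (Bi₂)∫_Ω φ dN. -/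
open MeasureTheory Filter Set Function

noncomputable section

variable {Ω : Type*} {X : Type*}

/-! ### Auxiliary lemmas -/

section Aux

variable [MeasurableSpace Ω] [NormedAddCommGroup X] [NormedSpace ℝ X]

namespace CountablePartitionOn

theorem Finer.trans' {G : Set Ω} {P Q R : CountablePartitionOn G}
    (h1 : P.Finer Q) (h2 : Q.Finer R) : P.Finer R := by
  intro n
  obtain ⟨m, hm⟩ := h1 n
  obtain ⟨l, hl⟩ := h2 m
  exact ⟨l, hm.trans hl⟩

theorem finer_refl {G : Set Ω} (P : CountablePartitionOn G) : P.Finer P :=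
  fun n => ⟨n, subset_rfl⟩

theorem piece_subset {G : Set Ω} (P : CountablePartitionOn G) (n : ℕ) :
    P.piece n ⊆ G := by
  conv_rhs => rw [← P.cover]
  exact subset_iUnion P.piece n

/-- Common refinement of two partitions. -/
def inter {G : Set Ω} (P Q : CountablePartitionOn G) : CountablePartitionOn G where
  piece n := P.piece (Nat.unpair n).1 ∩ Q.piece (Nat.unpair n).2
  measurable n := (P.measurable _).inter (Q.measurable _)
  disj := by
    intro a b hab
    have h : (Nat.unpair a).1 ≠ (Nat.unpair b).1 ∨ (Nat.unpair a).2 ≠ (Nat.unpair b).2 := by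
      by_contra hc
      push_neg at hc
      apply hab
      have : Nat.unpair a = Nat.unpair b := Prod.ext hc.1 hc.2
      rw [← Nat.pair_unpair a, ← Nat.pair_unpair b, this]
    rcases h with h | h
    · exact Disjoint.mono inter_subset_left inter_subset_left (P.disj h)
    · exact Disjoint.mono inter_subset_right inter_subset_right (Q.disj h)
  cover := by
    have h1 : (⋃ n, P.piece (Nat.unpair n).1 ∩ Q.piece (Nat.unpair n).2)
        = ⋃ p : ℕ × ℕ, P.piece p.1 ∩ Q.piece p.2 := by
      ext x
      simp only [mem_iUnion]
      constructor
      · rintro ⟨n, hn⟩; exact ⟨Nat.unpair n, hn⟩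
      · rintro ⟨⟨i, j⟩, hp⟩; exact ⟨Nat.pair i j, by simpa [Nat.unpair_pair] using hp⟩
    rw [h1]
    rw [iUnion_prod']
    calc (⋃ (i : ℕ) (j : ℕ), P.piece i ∩ Q.piece j)
        = ⋃ i, P.piece i ∩ ⋃ j, Q.piece j := by
          refine iUnion_congr fun i => ?_
          rw [inter_iUnion]
      _ = G := by
          rw [Q.cover, ← iUnion_inter, P.cover, inter_self]

theorem inter_finer_left {G : Set Ω} (P Q : CountablePartitionOn G) :
    (P.inter Q).Finer P := fun n => ⟨(Nat.unpair n).1, inter_subset_left⟩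

theorem inter_finer_right {G : Set Ω} (P Q : CountablePartitionOn G) :
    (P.inter Q).Finer Q := fun n => ⟨(Nat.unpair n).2, inter_subset_right⟩

end CountablePartitionOn

/-- From `limsup < δ` and a uniform bound, get an eventual bound. -/
theorem eventually_lt_of_limsup_lt_of_bdd {u : ℕ → ℝ} {δ B : ℝ}
    (hB : ∀ n, u n ≤ B) (h : limsup u atTop < δ) : ∀ᶠ n in atTop, u n < δ :=
  eventually_lt_of_limsup_lt h (isBoundedUnder_of ⟨B, hB⟩)

/-- Comparison of limsups of uniformly close sequences, robust to junk values. -/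
theorem limsup_le_limsup_add_of_abs_sub_le {u v : ℕ → ℝ} {δ : ℝ} (hδ : 0 ≤ δ)
    (hv : ∀ n, 0 ≤ v n) (h : ∀ n, |u n - v n| ≤ δ) :
    limsup v atTop ≤ limsup u atTop + δ := by
  rw [limsup_eq, limsup_eq]
  by_cases hSu : {a : ℝ | ∀ᶠ n in atTop, u n ≤ a}.Nonempty
  · have hbdd : BddBelow {a : ℝ | ∀ᶠ n in atTop, v n ≤ a} := by
      refine ⟨0, fun a ha => ?_⟩
      obtain ⟨n, hn⟩ := ha.exists
      exact le_trans (hv n) hn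
    have h1 : ∀ a ∈ {a : ℝ | ∀ᶠ n in atTop, u n ≤ a},
        sInf {a : ℝ | ∀ᶠ n in atTop, v n ≤ a} ≤ a + δ := by
      intro a ha
      refine csInf_le hbdd ?_
      filter_upwards [ha] with n hn
      have := h n
      have := abs_le.1 (h n)
      linarith
    have h2 : sInf {a : ℝ | ∀ᶠ n in atTop, v n ≤ a} - δ
        ≤ sInf {a : ℝ | ∀ᶠ n in atTop, u n ≤ a} := by
      refine le_csInf hSu fun a ha => ?_
      linarith [h1 a ha]
    linarith
  · have hSv : {a : ℝ | ∀ᶠ n in atTop, v n ≤ a} = ∅ := by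
      rw [Set.eq_empty_iff_forall_notMem]
      intro a ha
      apply hSu
      refine ⟨a + δ, ?_⟩
      filter_upwards [ha] with n hn
      have := abs_le.1 (h n)
      linarith
    rw [Set.not_nonempty_iff_eq_empty] at hSu
    rw [hSu, hSv]
    simpa using hδ

end Aux

section Osc

variable [MeasurableSpace Ω] [NormedAddCommGroup X] [NormedSpace ℝ X]

open CountablePartitionOn

/-- Oscillation estimate: if all tagged refinements of `Q` have Birkhoff sums eventually
within `δ` of `J`, then for any refinement and any two taggings, finite partial differences
are bounded by `2δ`. -/
theorem osc_bound (ν : Measure Ω) (Φ : Ω → X) {G : Set Ω} {J : X} {δ : ℝ}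
    (Q : CountablePartitionOn G)
    (hQ : ∀ P' : CountablePartitionOn G, P'.Finer Q → ∀ τ : ℕ → Ω, P'.IsTagging τ →
      ∀ᶠ n in atTop,
        ‖(∑ k ∈ Finset.range n, (ν (P'.piece k)).toReal • Φ (τ k)) - J‖ < δ)
    (P' : CountablePartitionOn G) (hP' : P'.Finer Q)
    (a b : ℕ → Ω) (ha : P'.IsTagging a) (hb : P'.IsTagging b) (F : Finset ℕ) :
    ‖∑ k ∈ F, (ν (P'.piece k)).toReal • (Φ (a k) - Φ (b k))‖ ≤ 2 * δ := by
  classical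
  set c : ℕ → Ω := fun k => if k ∈ F then a k else b k with hc
  have hct : P'.IsTagging c := by
    intro n hn
    by_cases h : n ∈ F
    · simpa [hc, h] using ha n hn
    · simpa [hc, h] using hb n hn
  have h1 := hQ P' hP' c hct
  have h2 := hQ P' hP' b hb
  have h3 : ∀ᶠ n in atTop, ∀ k ∈ F, k < n := by
    rw [eventually_atTop]
    refine ⟨(F.sup id) + 1, fun n hn k hk => ?_⟩
    exact lt_of_lt_of_le (Nat.lt_succ_of_le (Finset.le_sup (f := id) hk)) hn
  obtain ⟨n, hn1, hn2, hn3⟩ := (h1.and (h2.and h3)).exists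
  have key : (∑ k ∈ Finset.range n, (ν (P'.piece k)).toReal • Φ (c k))
      - (∑ k ∈ Finset.range n, (ν (P'.piece k)).toReal • Φ (b k))
      = ∑ k ∈ F, (ν (P'.piece k)).toReal • (Φ (a k) - Φ (b k)) := by
    rw [← Finset.sum_sub_distrib]
    rw [← Finset.sum_subset (fun k hk => Finset.mem_range.2 (hn3 k hk))
      (fun k _ hkF => by simp [hc, hkF])]
    refine Finset.sum_congr rfl fun k hk => ?_
    rw [smul_sub, hc]
    simp [hk]
  calc ‖∑ k ∈ F, (ν (P'.piece k)).toReal • (Φ (a k) - Φ (b k))‖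
      = ‖((∑ k ∈ Finset.range n, (ν (P'.piece k)).toReal • Φ (c k)) - J)
        - ((∑ k ∈ Finset.range n, (ν (P'.piece k)).toReal • Φ (b k)) - J)‖ := by
        rw [← key]; congr 1; abel
    _ ≤ ‖(∑ k ∈ Finset.range n, (ν (P'.piece k)).toReal • Φ (c k)) - J‖
        + ‖(∑ k ∈ Finset.range n, (ν (P'.piece k)).toReal • Φ (b k)) - J‖ := norm_sub_le _ _
    _ ≤ 2 * δ := by linarith

end Osc

section Key

variable [MeasurableSpace Ω] [NormedAddCommGroup X] [NormedSpace ℝ X]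

open CountablePartitionOn

/-- Key uniform estimate: the Bi₁ sums of `φ • Φ` and the Bi₂ sums of `φ` w.r.t. `N`
are uniformly close on sufficiently fine partitions. -/
theorem key_estimate [Nonempty Ω] (ν : Measure Ω) [IsFiniteMeasure ν]
    (φ : Ω → ℝ) (hφ : Measurable φ) (Φ : Ω → X) (hΦm : StronglyMeasurable Φ)
    (N : Set Ω → X) (hN : ∀ A : Set Ω, MeasurableSet A → HasBi1On ν Φ A (N A))
    {ε : ℝ} (hε : 0 < ε) :
    ∃ Pstar : CountablePartitionOn (univ : Set Ω),
      ∀ P' : CountablePartitionOn (univ : Set Ω), P'.Finer Pstar →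
      ∀ t : ℕ → Ω, P'.IsTagging t → ∀ n : ℕ,
        ‖∑ k ∈ Finset.range n,
            ((ν (P'.piece k)).toReal • (φ (t k) • Φ (t k)) - φ (t k) • N (P'.piece k))‖ ≤ ε := by
  classical
  -- level sets combining sizes of `φ` and `Φ`
  set G : ℕ → Set Ω := fun q =>
    {ω | ⌊|φ ω|⌋₊ = (Nat.unpair q).1 ∧ ⌊‖Φ ω‖⌋₊ = (Nat.unpair q).2} with hGdef
  have hGmeas : ∀ q, MeasurableSet (G q) := by
    intro q
    have h1 : Measurable fun ω => ⌊|φ ω|⌋₊ := hφ.abs.nat_floor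
    have h2 : Measurable fun ω => ⌊‖Φ ω‖⌋₊ := hΦm.norm.measurable.nat_floor
    exact (h1 (measurableSet_singleton _)).inter (h2 (measurableSet_singleton _))
  have hGdisj : Pairwise (Function.onFun Disjoint G) := by
    intro q q' hqq'
    rw [Function.onFun]
    rw [Set.disjoint_left]
    rintro ω ⟨h1, h2⟩ ⟨h3, h4⟩
    apply hqq'
    rw [← Nat.pair_unpair q, ← Nat.pair_unpair q']
    rw [← h1, ← h2, ← h3, ← h4]
  have hGmem : ∀ ω : Ω, ω ∈ G (Nat.pair ⌊|φ ω|⌋₊ ⌊‖Φ ω‖⌋₊) := by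
    intro ω
    simp [hGdef, Nat.unpair_pair]
  have hφbound : ∀ q, ∀ ω ∈ G q, |φ ω| < ((Nat.unpair q).1 : ℝ) + 1 := by
    intro q ω hω
    have := Nat.lt_floor_add_one |φ ω|
    rw [hω.1] at this
    exact_mod_cast this
  have hΦbound : ∀ q, ∀ ω ∈ G q, ‖Φ ω‖ < ((Nat.unpair q).2 : ℝ) + 1 := by
    intro q ω hω
    have := Nat.lt_floor_add_one ‖Φ ω‖
    rw [hω.2] at this
    exact_mod_cast this
  -- the tolerances per level
  set δ : ℕ → ℝ := fun q => ε / ((((Nat.unpair q).1 : ℝ) + 1) * 2 ^ (q + 4)) with hδdef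
  have hδpos : ∀ q, 0 < δ q := by
    intro q
    have : (0:ℝ) < (((Nat.unpair q).1 : ℝ) + 1) * 2 ^ (q + 4) := by positivity
    exact div_pos hε this
  -- level partitions from hN
  have hQex : ∀ q, ∃ Q : CountablePartitionOn (G q),
      ∀ P'' : CountablePartitionOn (G q), P''.Finer Q → ∀ τ : ℕ → Ω, P''.IsTagging τ →
        Filter.limsup
          (fun nn => ‖(∑ k ∈ Finset.range nn, (ν (P''.piece k)).toReal • Φ (τ k)) - N (G q)‖)
          Filter.atTop < δ q :=
    fun q => hN (G q) (hGmeas q) (δ q) (hδpos q)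
  choose Q hQ using hQex
  -- boundedness of Birkhoff sums when Φ is bounded on the underlying set
  have hbd : ∀ (H : Set Ω) (W : CountablePartitionOn H) (τ : ℕ → Ω), W.IsTagging τ →
      ∀ c : ℝ, 0 ≤ c → (∀ ω ∈ H, ‖Φ ω‖ ≤ c) → ∀ Nn : ℕ,
      ‖∑ k ∈ Finset.range Nn, (ν (W.piece k)).toReal • Φ (τ k)‖ ≤ c * (ν univ).toReal := by
    intro H W τ hτ c hc hΦc Nn
    have hmass : ∑ k ∈ Finset.range Nn, (ν (W.piece k)).toReal ≤ (ν univ).toReal := by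
      have h1 : ∑ k ∈ Finset.range Nn, ν (W.piece k) = ν (⋃ k ∈ Finset.range Nn, W.piece k) :=
        (measure_biUnion_finset (fun a _ b _ hab => W.disj hab) fun b _ => W.measurable b).symm
      have h2 : (∑ k ∈ Finset.range Nn, ν (W.piece k)) ≤ ν univ := by
        rw [h1]; exact measure_mono (subset_univ _)
      calc ∑ k ∈ Finset.range Nn, (ν (W.piece k)).toReal
          = (∑ k ∈ Finset.range Nn, ν (W.piece k)).toReal :=
            (ENNReal.toReal_sum fun a _ => measure_ne_top ν _).symm
        _ ≤ (ν univ).toReal :=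
            (ENNReal.toReal_le_toReal (by
                refine ne_of_lt (lt_of_le_of_lt h2 ?_); exact measure_lt_top ν _)
              (measure_ne_top ν _)).2 h2
    calc ‖∑ k ∈ Finset.range Nn, (ν (W.piece k)).toReal • Φ (τ k)‖
        ≤ ∑ k ∈ Finset.range Nn, ‖(ν (W.piece k)).toReal • Φ (τ k)‖ := norm_sum_le _ _
      _ ≤ ∑ k ∈ Finset.range Nn, c * (ν (W.piece k)).toReal := by
          refine Finset.sum_le_sum fun k _ => ?_
          rw [norm_smul, Real.norm_eq_abs, abs_of_nonneg ENNReal.toReal_nonneg]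
          by_cases hk : (W.piece k).Nonempty
          · have h3 : ‖Φ (τ k)‖ ≤ c := hΦc _ (W.piece_subset k (hτ k hk))
            calc (ν (W.piece k)).toReal * ‖Φ (τ k)‖
                ≤ (ν (W.piece k)).toReal * c :=
                  mul_le_mul_of_nonneg_left h3 ENNReal.toReal_nonneg
              _ = c * (ν (W.piece k)).toReal := mul_comm _ _
          · rw [Set.not_nonempty_iff_eq_empty.1 hk]
            simp
      _ = c * ∑ k ∈ Finset.range Nn, (ν (W.piece k)).toReal := (Finset.mul_sum _ _ _).symm
      _ ≤ c * (ν univ).toReal := mul_le_mul_of_nonneg_left hmass hc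
  -- eventual bounds on level partitions
  have hq_ev : ∀ q (P'' : CountablePartitionOn (G q)), P''.Finer (Q q) →
      ∀ τ : ℕ → Ω, P''.IsTagging τ →
      ∀ᶠ nn in atTop,
        ‖(∑ k ∈ Finset.range nn, (ν (P''.piece k)).toReal • Φ (τ k)) - N (G q)‖ < δ q := by
    intro q P'' hf τ hτ
    refine eventually_lt_of_limsup_lt_of_bdd
      (B := (((Nat.unpair q).2 : ℝ) + 1) * (ν univ).toReal + ‖N (G q)‖) ?_ (hQ q P'' hf τ hτ)
    intro nn
    calc ‖(∑ k ∈ Finset.range nn, (ν (P''.piece k)).toReal • Φ (τ k)) - N (G q)‖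
        ≤ ‖∑ k ∈ Finset.range nn, (ν (P''.piece k)).toReal • Φ (τ k)‖ + ‖N (G q)‖ :=
          norm_sub_le _ _
      _ ≤ (((Nat.unpair q).2 : ℝ) + 1) * (ν univ).toReal + ‖N (G q)‖ := by
          have := hbd (G q) P'' τ hτ (((Nat.unpair q).2 : ℝ) + 1) (by positivity)
            (fun ω hω => (hΦbound q ω hω).le) nn
          linarith
  -- the partition Pstar
  refine ⟨⟨fun nn => (Q (Nat.unpair nn).1).piece (Nat.unpair nn).2,
    fun nn => (Q _).measurable _, ?_, ?_⟩, ?_⟩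
  · intro a b hab
    rw [Function.onFun]
    by_cases h : (Nat.unpair a).1 = (Nat.unpair b).1
    · have h2 : (Nat.unpair a).2 ≠ (Nat.unpair b).2 := by
        intro h2
        apply hab
        rw [← Nat.pair_unpair a, ← Nat.pair_unpair b, h, h2]
      rw [h]
      exact (Q _).disj h2
    · exact ((hGdisj h).mono ((Q _).piece_subset _) ((Q _).piece_subset _))
  · ext ω
    simp only [mem_iUnion, mem_univ, iff_true]
    have hω := hGmem ω
    have hcov := (Q (Nat.pair ⌊|φ ω|⌋₊ ⌊‖Φ ω‖⌋₊)).cover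
    rw [← hcov] at hω
    obtain ⟨j, hj⟩ := mem_iUnion.1 hω
    exact ⟨Nat.pair (Nat.pair ⌊|φ ω|⌋₊ ⌊‖Φ ω‖⌋₊) j, by rw [Nat.unpair_pair]; exact hj⟩
  -- the main estimate
  intro P' hfine t ht n
  have hfine' : ∀ k, ∃ q j, P'.piece k ⊆ (Q q).piece j := by
    intro k
    obtain ⟨nn, hnn⟩ := hfine k
    exact ⟨(Nat.unpair nn).1, (Nat.unpair nn).2, hnn⟩
  choose qk jk hqk using hfine'
  have hpieceG : ∀ k, P'.piece k ⊆ G (qk k) := fun k =>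
    (hqk k).trans ((Q (qk k)).piece_subset _)
  -- per-piece tolerances
  set η : ℕ → ℝ := fun k => ε / (2 ^ (k + 3) * (|φ (t k)| + 1) * (‖Φ (t k)‖ + 1)) with hηdef
  have hηpos : ∀ k, 0 < η k := by
    intro k
    have h1 : (0:ℝ) < 2 ^ (k + 3) * (|φ (t k)| + 1) * (‖Φ (t k)‖ + 1) := by positivity
    exact div_pos hε h1
  -- per-piece partitions from hN
  have hRex : ∀ k, ∃ R : CountablePartitionOn (P'.piece k),
      ∀ P'' : CountablePartitionOn (P'.piece k), P''.Finer R → ∀ τ : ℕ → Ω, P''.IsTagging τ →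
        Filter.limsup
          (fun nn => ‖(∑ j ∈ Finset.range nn, (ν (P''.piece j)).toReal • Φ (τ j))
            - N (P'.piece k)‖) Filter.atTop < η k :=
    fun k => hN (P'.piece k) (P'.measurable k) (η k) (hηpos k)
  choose R hR using hRex
  -- tags for the per-piece partitions
  set s : ℕ → ℕ → Ω := fun k j =>
    if h : ((R k).piece j).Nonempty then h.some else t k with hsdef
  have hstag : ∀ k, (R k).IsTagging (s k) := by
    intro k j hj
    simp only [hsdef]
    rw [dif_pos hj]
    exact hj.some_mem
  have hsU : ∀ k j, (P'.piece k).Nonempty → s k j ∈ P'.piece k := by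
    intro k j hk
    simp only [hsdef]
    by_cases hj : ((R k).piece j).Nonempty
    · rw [dif_pos hj]; exact (R k).piece_subset j hj.some_mem
    · rw [dif_neg hj]; exact ht k hk
  -- mass of per-piece partitions
  have hHasSum : ∀ k, HasSum (fun j => (ν ((R k).piece j)).toReal) ((ν (P'.piece k)).toReal) := by
    intro k
    have h1 : ν (P'.piece k) = ∑' j, ν ((R k).piece j) := by
      conv_lhs => rw [← (R k).cover]
      exact measure_iUnion (R k).disj (R k).measurable
    have hne : ∑' j, ν ((R k).piece j) ≠ ⊤ := by rw [← h1]; exact measure_ne_top ν _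
    have h2 := ENNReal.hasSum_toReal hne
    have h3 : ∑' j, (ν ((R k).piece j)).toReal = (ν (P'.piece k)).toReal := by
      rw [← ENNReal.tsum_toReal_eq fun j => measure_ne_top ν _, ← h1]
    rwa [h3] at h2
  -- eventual approximation of N on pieces
  have hev1 : ∀ k, ∀ᶠ nn in atTop,
      ‖(∑ j ∈ Finset.range nn, (ν ((R k).piece j)).toReal • Φ (s k j)) - N (P'.piece k)‖
        < η k := by
    intro k
    refine eventually_lt_of_limsup_lt_of_bdd
      (B := (((Nat.unpair (qk k)).2 : ℝ) + 1) * (ν univ).toReal + ‖N (P'.piece k)‖) ?_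
      (hR k (R k) ((R k).finer_refl) (s k) (hstag k))
    intro nn
    calc ‖(∑ j ∈ Finset.range nn, (ν ((R k).piece j)).toReal • Φ (s k j)) - N (P'.piece k)‖
        ≤ ‖∑ j ∈ Finset.range nn, (ν ((R k).piece j)).toReal • Φ (s k j)‖ + ‖N (P'.piece k)‖ :=
          norm_sub_le _ _
      _ ≤ (((Nat.unpair (qk k)).2 : ℝ) + 1) * (ν univ).toReal + ‖N (P'.piece k)‖ := by
          have := hbd (P'.piece k) (R k) (s k) (hstag k) (((Nat.unpair (qk k)).2 : ℝ) + 1)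
            (by positivity) (fun ω hω => (hΦbound (qk k) ω (hpieceG k hω)).le) nn
          linarith
  have hev2 : ∀ k, ∀ᶠ nn in atTop,
      (ν (P'.piece k)).toReal - ∑ j ∈ Finset.range nn, (ν ((R k).piece j)).toReal < η k := by
    intro k
    obtain ⟨N0, hN0⟩ := Metric.tendsto_atTop.1 (hHasSum k).tendsto_sum_nat (η k) (hηpos k)
    rw [eventually_atTop]
    refine ⟨N0, fun nn hnn => ?_⟩
    have := hN0 nn hnn
    rw [Real.dist_eq] at this
    have := abs_lt.1 this
    linarith [this.1]
  choose NK hNK1 hNK2 using fun k => ((hev1 k).and (hev2 k)).exists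
  -- decomposition of each term
  set Sν : ℕ → ℝ := fun k => ∑ j ∈ Finset.range (NK k), (ν ((R k).piece j)).toReal with hSνdef
  set T : ℕ → X := fun k =>
    ∑ j ∈ Finset.range (NK k), (ν ((R k).piece j)).toReal • Φ (s k j) with hTdef
  set Main : ℕ → X := fun k =>
    ∑ j ∈ Finset.range (NK k), (ν ((R k).piece j)).toReal • (Φ (t k) - Φ (s k j)) with hMaindef
  set Err : ℕ → X := fun k =>
    ((ν (P'.piece k)).toReal - Sν k) • Φ (t k) + (T k - N (P'.piece k)) with hErrdef
  have hIdent : ∀ k, (ν (P'.piece k)).toReal • Φ (t k) - N (P'.piece k) = Main k + Err k := by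
    intro k
    have hM : Main k = Sν k • Φ (t k) - T k := by
      simp only [hMaindef, hTdef, hSνdef, smul_sub, Finset.sum_sub_distrib, Finset.sum_smul]
    rw [hM]
    simp only [hErrdef]
    rw [sub_smul]
    abel
  have hterm : ∀ k, (ν (P'.piece k)).toReal • (φ (t k) • Φ (t k)) - φ (t k) • N (P'.piece k)
      = φ (t k) • Main k + φ (t k) • Err k := by
    intro k
    rw [← smul_add, ← hIdent k, smul_sub, smul_comm]
  -- error bound
  have hSνle : ∀ k, Sν k ≤ (ν (P'.piece k)).toReal := fun k =>
    sum_le_hasSum _ (fun j _ => ENNReal.toReal_nonneg) (hHasSum k)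
  have hErrBound : ∀ k, ‖φ (t k) • Err k‖ ≤ ε / 2 ^ (k + 3) := by
    intro k
    have h1 : ‖Err k‖ ≤ η k * ‖Φ (t k)‖ + η k := by
      calc ‖Err k‖ ≤ ‖((ν (P'.piece k)).toReal - Sν k) • Φ (t k)‖ + ‖T k - N (P'.piece k)‖ :=
            norm_add_le _ _
        _ ≤ η k * ‖Φ (t k)‖ + η k := by
            have h2 : ‖((ν (P'.piece k)).toReal - Sν k) • Φ (t k)‖
                = ((ν (P'.piece k)).toReal - Sν k) * ‖Φ (t k)‖ := by
              rw [norm_smul, Real.norm_eq_abs, abs_of_nonneg (by linarith [hSνle k])]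
            have h3 := (hNK2 k)
            have h4 := le_of_lt (hNK1 k)
            have h5 : ((ν (P'.piece k)).toReal - Sν k) * ‖Φ (t k)‖ ≤ η k * ‖Φ (t k)‖ :=
              mul_le_mul_of_nonneg_right (le_of_lt h3) (norm_nonneg _)
            rw [h2]
            have h6 : ‖T k - N (P'.piece k)‖ ≤ η k := h4
            linarith
    have h7 : ‖φ (t k) • Err k‖ = |φ (t k)| * ‖Err k‖ := by
      rw [norm_smul, Real.norm_eq_abs]
    have h8 : |φ (t k)| * ‖Err k‖ ≤ |φ (t k)| * (η k * (‖Φ (t k)‖ + 1)) := by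
      refine mul_le_mul_of_nonneg_left ?_ (abs_nonneg _)
      calc ‖Err k‖ ≤ η k * ‖Φ (t k)‖ + η k := h1
        _ = η k * (‖Φ (t k)‖ + 1) := by ring
    have h9 : |φ (t k)| * (η k * (‖Φ (t k)‖ + 1)) ≤ ε / 2 ^ (k + 3) := by
      have ha : (0:ℝ) ≤ |φ (t k)| := abs_nonneg _
      have hb : (0:ℝ) ≤ ‖Φ (t k)‖ := norm_nonneg _
      have hc : (0:ℝ) < 2 ^ (k + 3) := by positivity
      have h10 : η k * (‖Φ (t k)‖ + 1) = ε / (2 ^ (k + 3) * (|φ (t k)| + 1)) := by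
        rw [hηdef]
        field_simp
      rw [h10, mul_div_assoc']
      rw [div_le_div_iff₀ (by positivity) hc]
      nlinarith [hε.le]
    rw [h7]
    linarith
  -- geometric sums
  have hgeo : ∀ σ : Finset ℕ, (∑ q ∈ σ, ((1:ℝ)/2) ^ q) ≤ 2 := by
    intro σ
    calc (∑ q ∈ σ, ((1:ℝ)/2) ^ q)
        ≤ ∑ q ∈ Finset.range (σ.sup id + 1), ((1:ℝ)/2) ^ q :=
          Finset.sum_le_sum_of_subset_of_nonneg
            (fun q hq => Finset.mem_range.2 (Nat.lt_succ_of_le (Finset.le_sup (f := id) hq)))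
            (fun q _ _ => by positivity)
      _ ≤ 2 := sum_geometric_two_le _
  have hErrSum : ‖∑ k ∈ Finset.range n, φ (t k) • Err k‖ ≤ ε / 4 := by
    calc ‖∑ k ∈ Finset.range n, φ (t k) • Err k‖
        ≤ ∑ k ∈ Finset.range n, ‖φ (t k) • Err k‖ := norm_sum_le _ _
      _ ≤ ∑ k ∈ Finset.range n, ε / 2 ^ (k + 3) := Finset.sum_le_sum fun k _ => hErrBound k
      _ = (ε / 8) * ∑ k ∈ Finset.range n, ((1:ℝ)/2) ^ k := by
          rw [Finset.mul_sum]
          refine Finset.sum_congr rfl fun k _ => ?_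
          rw [pow_add, one_div, inv_pow]
          ring
      _ ≤ (ε / 8) * 2 := by
          refine mul_le_mul_of_nonneg_left (hgeo _) (by positivity)
      _ = ε / 4 := by ring
  -- main term bound via Hahn–Banach
  have hMainSum : ‖∑ k ∈ Finset.range n, φ (t k) • Main k‖ ≤ ε / 4 := by
    set Z : X := ∑ k ∈ Finset.range n, φ (t k) • Main k with hZdef
    by_cases hZ0 : Z = 0
    · rw [hZ0, norm_zero]; positivity
    obtain ⟨g, hg1, hg2⟩ := exists_dual_vector ℝ Z (norm_ne_zero_iff.2 hZ0)
    set f : Ω → ℝ := fun ω => g (Φ ω) with hfdef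
    set A : ℕ → ℝ := fun k =>
      ∑ j ∈ Finset.range (NK k), (ν ((R k).piece j)).toReal * |f (t k) - f (s k j)| with hAdef
    have hA0 : ∀ k, 0 ≤ A k := fun k =>
      Finset.sum_nonneg fun j _ => mul_nonneg ENNReal.toReal_nonneg (abs_nonneg _)
    have hgMain : ∀ k, |g (Main k)| ≤ A k := by
      intro k
      rw [hMaindef]
      simp only [map_sum, _root_.map_smul, map_sub, smul_eq_mul]
      calc |∑ j ∈ Finset.range (NK k), (ν ((R k).piece j)).toReal * (g (Φ (t k)) - g (Φ (s k j)))|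
          ≤ ∑ j ∈ Finset.range (NK k),
              |(ν ((R k).piece j)).toReal * (g (Φ (t k)) - g (Φ (s k j)))| :=
            Finset.abs_sum_le_sum_abs _ _
        _ = A k := by
            rw [hAdef]
            refine Finset.sum_congr rfl fun j _ => ?_
            rw [abs_mul, abs_of_nonneg ENNReal.toReal_nonneg]
    have hZA : ‖Z‖ ≤ ∑ k ∈ Finset.range n, |φ (t k)| * A k := by
      calc ‖Z‖ = g Z := hg2.symm
        _ ≤ |g Z| := le_abs_self _
        _ = |∑ k ∈ Finset.range n, φ (t k) * g (Main k)| := by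
            rw [hZdef, map_sum]
            congr 1
            refine Finset.sum_congr rfl fun k _ => ?_
            rw [_root_.map_smul, smul_eq_mul]
        _ ≤ ∑ k ∈ Finset.range n, |φ (t k) * g (Main k)| := Finset.abs_sum_le_sum_abs _ _
        _ ≤ ∑ k ∈ Finset.range n, |φ (t k)| * A k := by
            refine Finset.sum_le_sum fun k _ => ?_
            rw [abs_mul]
            exact mul_le_mul_of_nonneg_left (hgMain k) (abs_nonneg _)
    have hAempty : ∀ k, ¬(P'.piece k).Nonempty → A k = 0 := by
      intro k hk
      have hU : P'.piece k = ∅ := Set.not_nonempty_iff_eq_empty.1 hk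
      rw [hAdef]
      refine Finset.sum_eq_zero fun j _ => ?_
      have h1 : (R k).piece j ⊆ (∅ : Set Ω) := hU ▸ (R k).piece_subset j
      have h2 : (R k).piece j = ∅ := Set.subset_empty_iff.1 h1
      rw [h2]
      simp
    -- choose near-maximizing comparison points
    have hbk : ∀ k, (P'.piece k).Nonempty →
        ∃ ω, ω ∈ P'.piece k ∧ A k ≤ (ν (P'.piece k)).toReal * |f (t k) - f ω| := by
      intro k hk
      by_cases hNk : NK k = 0
      · exact ⟨t k, ht k hk, by rw [hAdef]; simp [hNk]⟩
      · obtain ⟨j0, _, hj0⟩ := Finset.exists_max_image (Finset.range (NK k))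
          (fun j => |f (t k) - f (s k j)|) ⟨0, Finset.mem_range.2 (Nat.pos_of_ne_zero hNk)⟩
        refine ⟨s k j0, hsU k j0 hk, ?_⟩
        calc A k ≤ ∑ j ∈ Finset.range (NK k),
              (ν ((R k).piece j)).toReal * |f (t k) - f (s k j0)| := by
              rw [hAdef]
              exact Finset.sum_le_sum fun j hj =>
                mul_le_mul_of_nonneg_left (hj0 j hj) ENNReal.toReal_nonneg
          _ = Sν k * |f (t k) - f (s k j0)| := by rw [hSνdef, Finset.sum_mul]
          _ ≤ (ν (P'.piece k)).toReal * |f (t k) - f (s k j0)| :=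
              mul_le_mul_of_nonneg_right (hSνle k) (abs_nonneg _)
    set bfun : ℕ → Ω := fun k =>
      if h : (P'.piece k).Nonempty then (hbk k h).choose else Classical.arbitrary Ω with hbfundef
    have hbmem : ∀ k (h : (P'.piece k).Nonempty), bfun k ∈ P'.piece k := by
      intro k h
      simp only [hbfundef]
      rw [dif_pos h]
      exact (hbk k h).choose_spec.1
    have hbA : ∀ k (h : (P'.piece k).Nonempty),
        A k ≤ (ν (P'.piece k)).toReal * |f (t k) - f (bfun k)| := by
      intro k h
      simp only [hbfundef]
      rw [dif_pos h]
      exact (hbk k h).choose_spec.2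
    -- group by levels
    set Sne : Finset ℕ := (Finset.range n).filter (fun k => (P'.piece k).Nonempty) with hSnedef
    have hstep1 : ∑ k ∈ Finset.range n, |φ (t k)| * A k = ∑ k ∈ Sne, |φ (t k)| * A k := by
      rw [hSnedef]
      refine (Finset.sum_filter_of_ne fun k _ hne => ?_).symm
      by_contra hk
      exact hne (by rw [hAempty k hk, mul_zero])
    have hstep2 : ∑ k ∈ Sne, |φ (t k)| * A k
        = ∑ q ∈ Sne.image qk, ∑ k ∈ Sne.filter (fun k => qk k = q), |φ (t k)| * A k :=
      (Finset.sum_fiberwise_of_maps_to (fun k hk => Finset.mem_image_of_mem qk hk) _).symm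
    -- the per-level oscillation bound
    have hfiber : ∀ q ∈ Sne.image qk,
        ∑ k ∈ Sne.filter (fun k => qk k = q), |φ (t k)| * A k ≤ ε / 2 ^ (q + 3) := by
      intro q _
      set F : Finset ℕ := Sne.filter (fun k => qk k = q) with hFdef
      have hFmem : ∀ k ∈ F, (P'.piece k).Nonempty ∧ qk k = q := by
        intro k hk
        rw [hFdef, Finset.mem_filter] at hk
        rw [hSnedef, Finset.mem_filter] at hk
        exact ⟨hk.1.2, hk.2⟩
      -- the partition of G q induced by P'
      set W : CountablePartitionOn (G q) :=
        ⟨fun k => if qk k = q then P'.piece k else ∅,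
         fun k => by by_cases h : qk k = q <;> simp [h, P'.measurable k, MeasurableSet.empty],
         by
           intro a b hab
           rw [Function.onFun]
           by_cases ha : qk a = q <;> by_cases hb : qk b = q <;>
             simp only [ha, hb, if_true, if_false, if_pos, if_neg] <;>
             first
               | exact P'.disj hab
               | simp [Set.disjoint_empty, Set.empty_disjoint],
         by
           apply Set.Subset.antisymm
           · refine iUnion_subset fun k => ?_
             by_cases h : qk k = q
             · rw [if_pos h]; rw [← h]; exact hpieceG k
             · rw [if_neg h]; exact empty_subset _
           · intro ω hω
             have hωu : ω ∈ ⋃ k, P'.piece k := by rw [P'.cover]; exact mem_univ ω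
             obtain ⟨k, hk⟩ := mem_iUnion.1 hωu
             have hqkk : qk k = q := by
               by_contra hne
               exact Set.disjoint_left.1 (hGdisj hne) (hpieceG k hk) hω
             exact mem_iUnion.2 ⟨k, by rw [if_pos hqkk]; exact hk⟩⟩ with hWdef
      have hWpiece : ∀ k, W.piece k = if qk k = q then P'.piece k else ∅ := fun k => rfl
      have hWfiner : W.Finer (Q q) := by
        intro k
        by_cases h : qk k = q
        · refine ⟨jk k, ?_⟩
          rw [hWpiece, if_pos h, ← h]
          exact hqk k
        · exact ⟨0, by rw [hWpiece, if_neg h]; exact empty_subset _⟩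
      -- oriented taggings
      set a2 : ℕ → Ω := fun k =>
        if h : (P'.piece k).Nonempty then
          (if f (bfun k) ≤ f (t k) then t k else bfun k)
        else Classical.arbitrary Ω with ha2def
      set b2 : ℕ → Ω := fun k =>
        if h : (P'.piece k).Nonempty then
          (if f (bfun k) ≤ f (t k) then bfun k else t k)
        else Classical.arbitrary Ω with hb2def
      have hWnonempty : ∀ k, (W.piece k).Nonempty → (P'.piece k).Nonempty ∧ qk k = q := by
        intro k hk
        rw [hWpiece] at hk
        by_cases h : qk k = q
        · rw [if_pos h] at hk; exact ⟨hk, h⟩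
        · rw [if_neg h] at hk; exact absurd hk (by simp)
      have hta2 : W.IsTagging a2 := by
        intro k hk
        obtain ⟨hne, hq⟩ := hWnonempty k hk
        rw [hWpiece, if_pos hq, ha2def]
        simp only
        rw [dif_pos hne]
        by_cases hor : f (bfun k) ≤ f (t k)
        · rw [if_pos hor]; exact ht k hne
        · rw [if_neg hor]; exact hbmem k hne
      have htb2 : W.IsTagging b2 := by
        intro k hk
        obtain ⟨hne, hq⟩ := hWnonempty k hk
        rw [hWpiece, if_pos hq, hb2def]
        simp only
        rw [dif_pos hne]
        by_cases hor : f (bfun k) ≤ f (t k)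
        · rw [if_pos hor]; exact hbmem k hne
        · rw [if_neg hor]; exact ht k hne
      have hosc := osc_bound ν Φ (Q q) (hq_ev q) W hWfiner a2 b2 hta2 htb2 F
      -- transfer through g
      have hgsum : ∑ k ∈ F, (ν (P'.piece k)).toReal * |f (t k) - f (bfun k)| ≤ 2 * δ q := by
        have h1 : ∑ k ∈ F, (ν (P'.piece k)).toReal * |f (t k) - f (bfun k)|
            = g (∑ k ∈ F, (ν (W.piece k)).toReal • (Φ (a2 k) - Φ (b2 k))) := by
          rw [map_sum]
          refine Finset.sum_congr rfl fun k hk => ?_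
          obtain ⟨hne, hq⟩ := hFmem k hk
          rw [hWpiece, if_pos hq, _root_.map_smul, map_sub, smul_eq_mul]
          congr 1
          rw [ha2def, hb2def]
          simp only
          rw [dif_pos hne, dif_pos hne]
          by_cases hor : f (bfun k) ≤ f (t k)
          · rw [if_pos hor, if_pos hor, abs_of_nonneg (by linarith)]
          · push_neg at hor
            rw [if_neg (not_le.2 hor), if_neg (not_le.2 hor), abs_sub_comm,
              abs_of_nonneg (by linarith)]
        calc ∑ k ∈ F, (ν (P'.piece k)).toReal * |f (t k) - f (bfun k)|
            = g (∑ k ∈ F, (ν (W.piece k)).toReal • (Φ (a2 k) - Φ (b2 k))) := h1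
          _ ≤ |g (∑ k ∈ F, (ν (W.piece k)).toReal • (Φ (a2 k) - Φ (b2 k)))| := le_abs_self _
          _ = ‖g (∑ k ∈ F, (ν (W.piece k)).toReal • (Φ (a2 k) - Φ (b2 k)))‖ :=
              (Real.norm_eq_abs _).symm
          _ ≤ ‖g‖ * ‖∑ k ∈ F, (ν (W.piece k)).toReal • (Φ (a2 k) - Φ (b2 k))‖ :=
              g.le_opNorm _
          _ ≤ 2 * δ q := by rw [hg1, one_mul]; exact hosc
      have hφle : ∀ k ∈ F, |φ (t k)| ≤ ((Nat.unpair q).1 : ℝ) + 1 := by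
        intro k hk
        obtain ⟨hne, hq⟩ := hFmem k hk
        have : t k ∈ G q := by rw [← hq]; exact hpieceG k (ht k hne)
        exact (hφbound q _ this).le
      calc ∑ k ∈ F, |φ (t k)| * A k
          ≤ ∑ k ∈ F, (((Nat.unpair q).1 : ℝ) + 1)
              * ((ν (P'.piece k)).toReal * |f (t k) - f (bfun k)|) := by
            refine Finset.sum_le_sum fun k hk => ?_
            obtain ⟨hne, _⟩ := hFmem k hk
            exact mul_le_mul (hφle k hk) (hbA k hne) (hA0 k) (by positivity)
        _ = (((Nat.unpair q).1 : ℝ) + 1)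
              * ∑ k ∈ F, (ν (P'.piece k)).toReal * |f (t k) - f (bfun k)| :=
            (Finset.mul_sum _ _ _).symm
        _ ≤ (((Nat.unpair q).1 : ℝ) + 1) * (2 * δ q) :=
            mul_le_mul_of_nonneg_left hgsum (by positivity)
        _ ≤ ε / 2 ^ (q + 3) := by
            have hqpos : (0:ℝ) < ((Nat.unpair q).1 : ℝ) + 1 := by positivity
            have heq : (((Nat.unpair q).1 : ℝ) + 1) * (2 * δ q) = ε / 2 ^ (q + 3) := by
              rw [hδdef]
              simp only
              rw [pow_add, pow_add]
              field_simp
            exact le_of_eq heq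
    calc ‖Z‖ ≤ ∑ k ∈ Finset.range n, |φ (t k)| * A k := hZA
      _ = ∑ k ∈ Sne, |φ (t k)| * A k := hstep1
      _ = ∑ q ∈ Sne.image qk, ∑ k ∈ Sne.filter (fun k => qk k = q), |φ (t k)| * A k := hstep2
      _ ≤ ∑ q ∈ Sne.image qk, ε / 2 ^ (q + 3) := Finset.sum_le_sum hfiber
      _ = (ε / 8) * ∑ q ∈ Sne.image qk, ((1:ℝ)/2) ^ q := by
          rw [Finset.mul_sum]
          refine Finset.sum_congr rfl fun q _ => ?_
          rw [pow_add, one_div, inv_pow]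
          ring
      _ ≤ (ε / 8) * 2 := mul_le_mul_of_nonneg_left (hgeo _) (by positivity)
      _ = ε / 4 := by ring
  -- conclusion
  calc ‖∑ k ∈ Finset.range n,
        ((ν (P'.piece k)).toReal • (φ (t k) • Φ (t k)) - φ (t k) • N (P'.piece k))‖
      = ‖(∑ k ∈ Finset.range n, φ (t k) • Main k) + ∑ k ∈ Finset.range n, φ (t k) • Err k‖ := by
        rw [← Finset.sum_add_distrib]
        congr 1
        exact Finset.sum_congr rfl fun k _ => hterm k
    _ ≤ ‖∑ k ∈ Finset.range n, φ (t k) • Main k‖ + ‖∑ k ∈ Finset.range n, φ (t k) • Err k‖ :=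
        norm_add_le _ _
    _ ≤ ε / 4 + ε / 4 := add_le_add hMainSum hErrSum
    _ ≤ ε := by linarith

end Key

/-- Theorem 2.7 of the paper. Let `φ : Ω → ℝ` be measurable and
`Φ : Ω → X` strongly measurable and first-type Birkhoff integrable w.r.t. `ν`, with
indefinite integral `N A = (Bi₁)∫_A Φ dν`.  Then `φ • Φ` is first-type Birkhoff
integrable w.r.t. `ν` iff `φ` is second-type Birkhoff integrable w.r.t. `N`, and
the two integrals coincide (i.e. they have exactly the same Birkhoff integrals). -/
theorem bi1_product_iff_bi2
    [MeasurableSpace Ω] [NormedAddCommGroup X] [NormedSpace ℝ X]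
    (ν : Measure Ω) [IsFiniteMeasure ν]
    (φ : Ω → ℝ) (hφ : Measurable φ)
    (Φ : Ω → X) (hΦm : StronglyMeasurable Φ)
    (hΦi : ∃ I, HasBi1On ν Φ Set.univ I)
    (N : Set Ω → X) (hN : ∀ A : Set Ω, MeasurableSet A → HasBi1On ν Φ A (N A)) :
    ∀ I : X, HasBi1On ν (fun ω => φ ω • Φ ω) Set.univ I ↔ HasBi2On N φ Set.univ I := by
  intro I
  rcases isEmpty_or_nonempty Ω with hΩ | hΩ
  · -- degenerate case: no points, hence no taggings
    have htriv : ∀ (term : Ω → Set Ω → X) (J : X), HasBirkhoffSumOn term Set.univ J := by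
      intro term J ε hε
      refine ⟨⟨fun _ => (∅ : Set Ω), fun _ => MeasurableSet.empty, ?_, ?_⟩, ?_⟩
      · intro a b hab
        rw [Function.onFun]
        exact Set.disjoint_empty _
      · rw [Set.iUnion_empty]
        exact (Set.univ_eq_empty_iff.2 hΩ).symm
      · intro P' _ t _
        exact (IsEmpty.false (t 0)).elim
    constructor <;> intro _ <;> exact htriv _ I
  · constructor
    · -- Bi₁ of φ • Φ implies Bi₂ of φ w.r.t. N
      intro h1 ε hε
      obtain ⟨Pk, hPk⟩ := key_estimate ν φ hφ Φ hΦm N hN (show (0:ℝ) < ε/4 by linarith)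
      obtain ⟨P1, hP1⟩ := h1 (ε/4) (by linarith)
      refine ⟨P1.inter Pk, ?_⟩
      intro P' hP' t ht
      have hf1 : P'.Finer P1 := hP'.trans' (P1.inter_finer_left Pk)
      have hfk : P'.Finer Pk := hP'.trans' (P1.inter_finer_right Pk)
      have hls : Filter.limsup (fun n =>
          ‖(∑ k ∈ Finset.range n, (ν (P'.piece k)).toReal • (φ (t k) • Φ (t k))) - I‖)
          Filter.atTop < ε/4 := hP1 P' hf1 t ht
      have hK := hPk P' hfk t ht
      have habs : ∀ n,
          |‖(∑ k ∈ Finset.range n, (ν (P'.piece k)).toReal • (φ (t k) • Φ (t k))) - I‖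
            - ‖(∑ k ∈ Finset.range n, φ (t k) • N (P'.piece k)) - I‖| ≤ ε/4 := by
        intro n
        refine le_trans (abs_norm_sub_norm_le _ _) ?_
        have heq : ((∑ k ∈ Finset.range n, (ν (P'.piece k)).toReal • (φ (t k) • Φ (t k))) - I)
            - ((∑ k ∈ Finset.range n, φ (t k) • N (P'.piece k)) - I)
            = ∑ k ∈ Finset.range n,
                ((ν (P'.piece k)).toReal • (φ (t k) • Φ (t k)) - φ (t k) • N (P'.piece k)) := by
          rw [Finset.sum_sub_distrib]
          abel
        rw [heq]
        exact hK n
      show Filter.limsup (fun n =>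
          ‖(∑ k ∈ Finset.range n, φ (t k) • N (P'.piece k)) - I‖) Filter.atTop < ε
      have hb := limsup_le_limsup_add_of_abs_sub_le (δ := ε/4) (by linarith)
        (fun n => norm_nonneg _) habs
      calc Filter.limsup (fun n =>
            ‖(∑ k ∈ Finset.range n, φ (t k) • N (P'.piece k)) - I‖) Filter.atTop
          ≤ Filter.limsup (fun n =>
            ‖(∑ k ∈ Finset.range n, (ν (P'.piece k)).toReal • (φ (t k) • Φ (t k))) - I‖)
            Filter.atTop + ε/4 := hb
        _ < ε := by linarith
    · -- Bi₂ of φ w.r.t. N implies Bi₁ of φ • Φ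
      intro h2 ε hε
      obtain ⟨Pk, hPk⟩ := key_estimate ν φ hφ Φ hΦm N hN (show (0:ℝ) < ε/4 by linarith)
      obtain ⟨P2, hP2⟩ := h2 (ε/4) (by linarith)
      refine ⟨P2.inter Pk, ?_⟩
      intro P' hP' t ht
      have hf2 : P'.Finer P2 := hP'.trans' (P2.inter_finer_left Pk)
      have hfk : P'.Finer Pk := hP'.trans' (P2.inter_finer_right Pk)
      have hls : Filter.limsup (fun n =>
          ‖(∑ k ∈ Finset.range n, φ (t k) • N (P'.piece k)) - I‖)
          Filter.atTop < ε/4 := hP2 P' hf2 t ht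
      have hK := hPk P' hfk t ht
      have habs : ∀ n,
          |‖(∑ k ∈ Finset.range n, φ (t k) • N (P'.piece k)) - I‖
            - ‖(∑ k ∈ Finset.range n, (ν (P'.piece k)).toReal • (φ (t k) • Φ (t k))) - I‖|
            ≤ ε/4 := by
        intro n
        rw [abs_sub_comm]
        refine le_trans (abs_norm_sub_norm_le _ _) ?_
        have heq : ((∑ k ∈ Finset.range n, (ν (P'.piece k)).toReal • (φ (t k) • Φ (t k))) - I)
            - ((∑ k ∈ Finset.range n, φ (t k) • N (P'.piece k)) - I)
            = ∑ k ∈ Finset.range n,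
                ((ν (P'.piece k)).toReal • (φ (t k) • Φ (t k)) - φ (t k) • N (P'.piece k)) := by
          rw [Finset.sum_sub_distrib]
          abel
        rw [heq]
        exact hK n
      show Filter.limsup (fun n =>
          ‖(∑ k ∈ Finset.range n, (ν (P'.piece k)).toReal • (φ (t k) • Φ (t k))) - I‖)
          Filter.atTop < ε
      have hb := limsup_le_limsup_add_of_abs_sub_le (δ := ε/4) (by linarith)
        (fun n => norm_nonneg _) habs
      calc Filter.limsup (fun n =>
            ‖(∑ k ∈ Finset.range n, (ν (P'.piece k)).toReal • (φ (t k) • Φ (t k))) - I‖)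
            Filter.atTop
          ≤ Filter.limsup (fun n =>
            ‖(∑ k ∈ Finset.range n, φ (t k) • N (P'.piece k)) - I‖) Filter.atTop + ε/4 := hb
        _ < ε := by linarith
end
end
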